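/- arXiv:1601.06529 — 2 statements merged into one kernel-verified Lean document; each statement's English description precedes it below -/
import Mathlib

section
/- Let f be a differentiable convex function on (0,∞) extending continuously to 0 with f(0) = f(1) = 0 and f'(0) := lim_{x→0+} f'(x) ∈ ℝ. Then for any two rank-one projections P, Q on a finite-dimensional complex Hilbert space, the Bregman f-divergence satisfies H_f(P,Q) = (1 − tr(PQ))·(f'(1) − f'(0)). -/
open Matrix
open scoped ComplexOrder

/-- Standard operator function: apply `f : ℝ → ℝ` to a Hermitian matrix via its
spectral decomposition (junk value `0` for non-Hermitian input). -/
noncomputable def matFun {n : ℕ} (f : ℝ → ℝ) (A : Matrix (Fin n) (Fin n) ℂ) :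
    Matrix (Fin n) (Fin n) ℂ :=
  if hA : A.IsHermitian then
    (hA.eigenvectorUnitary : Matrix (Fin n) (Fin n) ℂ) *
      Matrix.diagonal (fun i => (f (hA.eigenvalues i) : ℂ)) *
      (star (hA.eigenvectorUnitary : Matrix (Fin n) (Fin n) ℂ))
  else 0

/-- Bregman `f`-divergence `H_f(A,B) = tr (f(A) - f(B) - f'(B)(A-B))`. -/
noncomputable def bregman {n : ℕ} (f : ℝ → ℝ) (A B : Matrix (Fin n) (Fin n) ℂ) : ℝ :=
  ((matFun f A - matFun f B - matFun (deriv f) B * (A - B)).trace).re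

/-- Jensen `f`-divergence `J_f(A,B) = tr (½(f(A)+f(B)) - f(½(A+B)))`. -/
noncomputable def jensen {n : ℕ} (f : ℝ → ℝ) (A B : Matrix (Fin n) (Fin n) ℂ) : ℝ :=
  (((1/2 : ℂ) • (matFun f A + matFun f B) - matFun f ((1/2 : ℂ) • (A + B))).trace).re

/-- `P` is a rank-one (orthogonal) projection. -/
def IsRankOneProj {n : ℕ} (P : Matrix (Fin n) (Fin n) ℂ) : Prop :=
  P.IsHermitian ∧ P * P = P ∧ P.rank = 1

lemma eig_proj {n : ℕ} {P : Matrix (Fin n) (Fin n) ℂ} (hP : P.IsHermitian)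
    (hidem : P * P = P) (i : Fin n) : hP.eigenvalues i = 0 ∨ hP.eigenvalues i = 1 := by
  set v := ⇑(hP.eigenvectorBasis i) with hv
  have hv0 : v ≠ 0 := by
    intro h
    exact hP.eigenvectorBasis.orthonormal.ne_zero i (by ext j; exact congrFun h j)
  have h1 : P *ᵥ v = hP.eigenvalues i • v := hP.mulVec_eigenvectorBasis i
  have h2 : hP.eigenvalues i • v = (hP.eigenvalues i * hP.eigenvalues i) • v := by
    conv_lhs => rw [← h1, ← hidem, ← mulVec_mulVec, h1, mulVec_smul, h1, smul_smul]
  have h3 : (hP.eigenvalues i * hP.eigenvalues i - hP.eigenvalues i) • v = 0 := by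
    rw [sub_smul, ← h2, sub_self]
  rcases smul_eq_zero.mp h3 with h | h
  · have h4 : hP.eigenvalues i * (hP.eigenvalues i - 1) = 0 := by ring_nf; linarith [h]
    rcases mul_eq_zero.mp h4 with h5 | h5
    · exact Or.inl h5
    · exact Or.inr (by linarith)
  · exact absurd h hv0

lemma matFun_proj {n : ℕ} (g : ℝ → ℝ) {P : Matrix (Fin n) (Fin n) ℂ}
    (hP : P.IsHermitian) (hidem : P * P = P) :
    matFun g P = (g 0 : ℂ) • 1 + ((g 1 - g 0 : ℝ) : ℂ) • P := by
  rw [matFun, dif_pos hP]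
  have hdiag : (Matrix.diagonal (fun i => (g (hP.eigenvalues i) : ℂ)))
      = (g 0 : ℂ) • 1 + ((g 1 - g 0 : ℝ) : ℂ) •
        Matrix.diagonal (RCLike.ofReal ∘ hP.eigenvalues) := by
    ext i j
    simp only [Matrix.add_apply, Matrix.smul_apply, Matrix.diagonal_apply, Matrix.one_apply]
    by_cases hij : i = j
    · subst hij
      rcases eig_proj hP hidem i with h | h <;> simp [h]
    · simp [hij]
  set U := (hP.eigenvectorUnitary : Matrix (Fin n) (Fin n) ℂ) with hU
  have hUU : U * star U = 1 := (Matrix.mem_unitaryGroup_iff).mp hP.eigenvectorUnitary.2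
  calc U * (Matrix.diagonal (fun i => (g (hP.eigenvalues i) : ℂ))) * star U
      = (g 0 : ℂ) • (U * 1 * star U) + ((g 1 - g 0 : ℝ) : ℂ) •
        (U * Matrix.diagonal (RCLike.ofReal ∘ hP.eigenvalues) * star U) := by
        rw [hdiag, Matrix.mul_add, Matrix.add_mul, Matrix.mul_smul, Matrix.smul_mul,
          Matrix.mul_smul, Matrix.smul_mul]
    _ = (g 0 : ℂ) • 1 + ((g 1 - g 0 : ℝ) : ℂ) • P := by
        rw [Matrix.mul_one, hUU]
        conv_rhs => rw [hP.spectral_theorem, Unitary.conjStarAlgAut_apply]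

lemma trace_proj {n : ℕ} {P : Matrix (Fin n) (Fin n) ℂ} (hP : IsRankOneProj P) :
    P.trace = 1 := by
  obtain ⟨hH, hidem, hrank⟩ := hP
  have hUU : star (hH.eigenvectorUnitary : Matrix (Fin n) (Fin n) ℂ) *
      (hH.eigenvectorUnitary : Matrix (Fin n) (Fin n) ℂ) = 1 :=
    (Matrix.mem_unitaryGroup_iff').mp hH.eigenvectorUnitary.2
  have htr : P.trace = ∑ i, (hH.eigenvalues i : ℂ) := by
    conv_lhs => rw [hH.spectral_theorem, Unitary.conjStarAlgAut_apply]
    rw [Matrix.trace_mul_cycle, hUU, Matrix.one_mul, Matrix.trace_diagonal]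
    rfl
  have hcard : P.rank = (Finset.univ.filter fun i => hH.eigenvalues i ≠ 0).card := by
    rw [hH.rank_eq_card_non_zero_eigs, Fintype.card_subtype]
  have hsum : ∑ i, (hH.eigenvalues i : ℂ)
      = ((Finset.univ.filter fun i => hH.eigenvalues i ≠ 0).card : ℂ) := by
    rw [Finset.card_eq_sum_ones, Nat.cast_sum]
    rw [← Finset.sum_filter_add_sum_filter_not Finset.univ (fun i => hH.eigenvalues i ≠ 0)]
    have h1 : ∑ i ∈ Finset.univ.filter (fun i => ¬ hH.eigenvalues i ≠ 0),
        (hH.eigenvalues i : ℂ) = 0 := by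
      apply Finset.sum_eq_zero
      intro i hi
      simp only [Finset.mem_filter, not_not] at hi
      rw [hi.2]; simp
    rw [h1, add_zero]
    apply Finset.sum_congr rfl
    intro i hi
    simp only [Finset.mem_filter] at hi
    rcases eig_proj hH hidem i with h | h
    · exact absurd h hi.2
    · rw [h]; simp
  rw [htr, hsum, ← hcard, hrank]
  simp

/-- Bregman divergence between two rank-one projections when `f'`
extends continuously to `0`. -/
theorem bregman_rankOne_projections {n : ℕ} (f : ℝ → ℝ)
    (hconv : ConvexOn ℝ (Set.Ioi 0) f)
    (hdiff : ∀ x ∈ Set.Ici (0 : ℝ), DifferentiableAt ℝ f x)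
    (hcont : ContinuousOn (deriv f) (Set.Ici 0))
    (hf0 : f 0 = 0) (hf1 : f 1 = 0)
    (P Q : Matrix (Fin n) (Fin n) ℂ) (hP : IsRankOneProj P) (hQ : IsRankOneProj Q) :
    bregman f P Q = (1 - ((P * Q).trace).re) * (deriv f 1 - deriv f 0) := by
  obtain ⟨hPH, hPid, hPrank⟩ := hP
  obtain ⟨hQH, hQid, hQrank⟩ := hQ
  have hfP : matFun f P = 0 := by
    rw [matFun_proj f hPH hPid, hf0, hf1]; simp
  have hfQ : matFun f Q = 0 := by
    rw [matFun_proj f hQH hQid, hf0, hf1]; simp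
  have hdQ : matFun (deriv f) Q = ((deriv f 0 : ℝ) : ℂ) • 1 +
      ((deriv f 1 - deriv f 0 : ℝ) : ℂ) • Q := matFun_proj (deriv f) hQH hQid
  have htrP : P.trace = 1 := trace_proj ⟨hPH, hPid, hPrank⟩
  have htrQ : Q.trace = 1 := trace_proj ⟨hQH, hQid, hQrank⟩
  rw [bregman, hfP, hfQ, hdQ]
  have hexp : (((deriv f 0 : ℝ) : ℂ) • 1 + ((deriv f 1 - deriv f 0 : ℝ) : ℂ) • Q) * (P - Q)
      = ((deriv f 0 : ℝ) : ℂ) • (P - Q) +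
        ((deriv f 1 - deriv f 0 : ℝ) : ℂ) • (Q * P - Q) := by
    rw [Matrix.add_mul, Matrix.smul_mul, Matrix.smul_mul, Matrix.one_mul,
      Matrix.mul_sub, hQid]
  rw [hexp]
  have htrQP : (Q * P).trace = (P * Q).trace := Matrix.trace_mul_comm Q P
  simp only [sub_zero, zero_sub, Matrix.trace_neg, Matrix.trace_add, Matrix.trace_smul,
    Matrix.trace_sub, htrP, htrQ, htrQP, sub_self, smul_zero, zero_add]
  rw [smul_eq_mul, Complex.neg_re, Complex.mul_re]
  simp [Complex.sub_re, Complex.sub_im, Complex.ofReal_re, Complex.ofReal_im]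
  ring
end

section
/- Let f be strictly convex and continuous on [0,∞) with f(0) = f(1) = 0. For any two rank-one projections P, Q on a finite-dimensional complex Hilbert space, the Jensen f-divergence satisfies J_f(P,Q) = −( f(½(1 + √(tr PQ))) + f(½(1 − √(tr PQ))) ). -/
open Matrix
open scoped ComplexOrder

section Aux
variable {n : ℕ} {A : Matrix (Fin n) (Fin n) ℂ}

lemma aux_star_mul_self (hA : A.IsHermitian) :
    star (hA.eigenvectorUnitary : Matrix (Fin n) (Fin n) ℂ) *
      (hA.eigenvectorUnitary : Matrix (Fin n) (Fin n) ℂ) = 1 :=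
  (Matrix.mem_unitaryGroup_iff').mp (hA.eigenvectorUnitary).2

lemma trace_matFun (f : ℝ → ℝ) (hA : A.IsHermitian) :
    (matFun f A).trace = ∑ i, (f (hA.eigenvalues i) : ℂ) := by
  rw [matFun, dif_pos hA, trace_mul_cycle, aux_star_mul_self hA,
    Matrix.one_mul, trace_diagonal]

lemma eigenvalues_of_proj (hA : A.IsHermitian) (hidem : A * A = A) (i : Fin n) :
    hA.eigenvalues i = 0 ∨ hA.eigenvalues i = 1 := by
  have hv := hA.mulVec_eigenvectorBasis i
  have hvne : ⇑(hA.eigenvectorBasis i) ≠ 0 := by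
    intro h
    have : hA.eigenvectorBasis i = 0 := by
      ext j; exact congrFun h j
    exact hA.eigenvectorBasis.orthonormal.ne_zero i this
  have h2 : A *ᵥ (A *ᵥ ⇑(hA.eigenvectorBasis i)) = A *ᵥ ⇑(hA.eigenvectorBasis i) := by
    rw [mulVec_mulVec, hidem]
  rw [hv, mulVec_smul, hv, smul_smul] at h2
  have h3 : ((hA.eigenvalues i * hA.eigenvalues i : ℝ) - hA.eigenvalues i) •
      ⇑(hA.eigenvectorBasis i) = 0 := by
    rw [sub_smul, h2, sub_self]
  rcases smul_eq_zero.mp h3 with h | h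
  · rcases mul_eq_zero.mp (show hA.eigenvalues i * (hA.eigenvalues i - 1) = 0 by nlinarith [h])
      with h' | h'
    · exact Or.inl h'
    · exact Or.inr (by linarith)
  · exact absurd h hvne

end Aux

section Aux2
variable {n : ℕ} {A : Matrix (Fin n) (Fin n) ℂ}

lemma matFun_eq_zero_of_proj (f : ℝ → ℝ) (hf0 : f 0 = 0) (hf1 : f 1 = 0)
    (hA : A.IsHermitian) (hidem : A * A = A) : matFun f A = 0 := by
  rw [matFun, dif_pos hA]
  have : (Matrix.diagonal (fun i => (f (hA.eigenvalues i) : ℂ))) = 0 := by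
    have : ∀ i, f (hA.eigenvalues i) = 0 := by
      intro i
      rcases eigenvalues_of_proj hA hidem i with h | h <;> rw [h] <;> assumption
    ext i j
    by_cases hij : i = j <;> simp [Matrix.diagonal, hij, this]
  rw [this, Matrix.mul_zero, Matrix.zero_mul]

lemma trace_eq_sum_eigen (hA : A.IsHermitian) :
    A.trace = ∑ i, (hA.eigenvalues i : ℂ) := by
  conv_lhs => rw [hA.spectral_theorem, Unitary.conjStarAlgAut_apply]
  rw [trace_mul_cycle, aux_star_mul_self hA, Matrix.one_mul, trace_diagonal]
  rfl

lemma trace_sq_eq_sum_eigen_sq (hA : A.IsHermitian) :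
    (A * A).trace = ∑ i, (hA.eigenvalues i : ℂ) ^ 2 := by
  set U := (hA.eigenvectorUnitary : Matrix (Fin n) (Fin n) ℂ)
  set D := Matrix.diagonal (RCLike.ofReal ∘ hA.eigenvalues : Fin n → ℂ)
  have h1 : A * A = U * (D * D) * star U := by
    conv_lhs => rw [hA.spectral_theorem, Unitary.conjStarAlgAut_apply]
    simp only [Matrix.mul_assoc]
    rw [← Matrix.mul_assoc (star U) U, aux_star_mul_self hA, Matrix.one_mul]
  rw [h1, trace_mul_cycle, ← Matrix.mul_assoc, aux_star_mul_self hA, Matrix.one_mul]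
  rw [show D * D = Matrix.diagonal (fun i => (hA.eigenvalues i : ℂ) ^ 2) by
    rw [Matrix.diagonal_mul_diagonal]; congr 1; funext i; simp [sq]]
  rw [trace_diagonal]

lemma rank_add_le' (A B : Matrix (Fin n) (Fin n) ℂ) : (A + B).rank ≤ A.rank + B.rank := by
  have hr : LinearMap.range (A + B).mulVecLin ≤
      LinearMap.range A.mulVecLin ⊔ LinearMap.range B.mulVecLin := by
    rintro x ⟨y, rfl⟩
    rw [Matrix.mulVecLin_add]
    exact Submodule.add_mem_sup ⟨y, rfl⟩ ⟨y, rfl⟩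
  calc (A + B).rank ≤ Module.finrank ℂ
        ↥(LinearMap.range A.mulVecLin ⊔ LinearMap.range B.mulVecLin) :=
        Submodule.finrank_mono hr
    _ ≤ A.rank + B.rank := Submodule.finrank_add_le_finrank_add_finrank _ _

lemma rank_half_smul (A : Matrix (Fin n) (Fin n) ℂ) : ((1/2 : ℂ) • A).rank = A.rank := by
  have h : (1/2 : ℂ) • A = ((1/2 : ℂ) • (1 : Matrix (Fin n) (Fin n) ℂ)) * A := by
    rw [Matrix.smul_mul, Matrix.one_mul]
  rw [h]
  apply Matrix.rank_mul_eq_right_of_isUnit_det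
  rw [Matrix.det_smul, Matrix.det_one, mul_one]
  exact (IsUnit.pow _ (by norm_num : IsUnit (1/2 : ℂ)))

end Aux2

section Aux3
variable {n : ℕ}

lemma trace_of_rankOneProj {P : Matrix (Fin n) (Fin n) ℂ}
    (hPh : P.IsHermitian) (hPi : P * P = P) (hPr : P.rank = 1) :
    P.trace = 1 ∧ ∑ i, hPh.eigenvalues i = 1 := by
  have hcard : (Finset.univ.filter (fun i => hPh.eigenvalues i ≠ 0)).card = 1 := by
    have := hPh.rank_eq_card_non_zero_eigs
    rw [hPr, Fintype.card_subtype] at this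
    omega
  have hsum : ∑ i, hPh.eigenvalues i = 1 := by
    rw [← Finset.sum_filter_ne_zero]
    obtain ⟨i, hi⟩ := Finset.card_eq_one.mp hcard
    rw [hi, Finset.sum_singleton]
    have : hPh.eigenvalues i ≠ 0 := by
      have : i ∈ Finset.univ.filter (fun j => hPh.eigenvalues j ≠ 0) := hi ▸ Finset.mem_singleton_self i
      exact (Finset.mem_filter.mp this).2
    rcases eigenvalues_of_proj hPh hPi i with h | h
    · exact absurd h this
    · exact h
  refine ⟨?_, hsum⟩
  rw [trace_eq_sum_eigen hPh, ← Complex.ofReal_sum, hsum, Complex.ofReal_one]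

lemma posSemidef_of_proj {P : Matrix (Fin n) (Fin n) ℂ}
    (hPh : P.IsHermitian) (hPi : P * P = P) : P.PosSemidef := by
  have h : P = Pᴴ * P := by rw [hPh, hPi]
  rw [h]
  exact Matrix.posSemidef_conjTranspose_mul_self P

end Aux3

section Aux4
variable {n : ℕ}

lemma posSemidef_half_smul {A : Matrix (Fin n) (Fin n) ℂ} (hA : A.PosSemidef) :
    ((1/2 : ℂ) • A).PosSemidef := by
  rw [Matrix.posSemidef_iff_dotProduct_mulVec]
  constructor
  · have h : ((1/2:ℂ) • A)ᴴ = star (1/2:ℂ) • Aᴴ := Matrix.conjTranspose_smul _ _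
    rw [Matrix.IsHermitian, h, hA.1]
    norm_num
  · intro x
    rw [smul_mulVec, dotProduct_smul, smul_eq_mul]
    have h2 : (0:ℂ) ≤ (1/2:ℂ) := by
      rw [Complex.le_def]; norm_num
    exact mul_nonneg h2 (hA.dotProduct_mulVec_nonneg x)

lemma sum_f_two_support (f : ℝ → ℝ) (hf0 : f 0 = 0) (t : ℝ) (μ : Fin n → ℝ)
    (hcard : (Finset.univ.filter (fun i => μ i ≠ 0)).card ≤ 2)
    (hsum : ∑ i, μ i = 1) (hsq : ∑ i, (μ i)^2 = (1 + t)/2) :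
    ∑ i, f (μ i) = f ((1 + Real.sqrt t)/2) + f ((1 - Real.sqrt t)/2) := by
  classical
  set s := Finset.univ.filter (fun i => μ i ≠ 0) with hs
  have hzero : ∀ i, i ∉ s → μ i = 0 := by
    intro i hi
    by_contra h
    exact hi (Finset.mem_filter.mpr ⟨Finset.mem_univ _, h⟩)
  have hsub := Finset.subset_univ s
  have hsum' : ∑ i ∈ s, μ i = 1 := by
    rw [← hsum]
    exact Finset.sum_subset hsub (fun i _ hi => hzero i hi)
  have hsq' : ∑ i ∈ s, (μ i)^2 = (1 + t)/2 := by
    rw [← hsq]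
    exact Finset.sum_subset hsub (fun i _ hi => by rw [hzero i hi]; ring)
  have hf' : ∑ i, f (μ i) = ∑ i ∈ s, f (μ i) :=
    (Finset.sum_subset hsub (fun i _ hi => by rw [hzero i hi, hf0])).symm
  have hc : s.card = 0 ∨ s.card = 1 ∨ s.card = 2 := by omega
  rcases hc with hc | hc | hc
  · exfalso
    rw [Finset.card_eq_zero.mp hc, Finset.sum_empty] at hsum'
    norm_num at hsum'
  · obtain ⟨i, hi⟩ := Finset.card_eq_one.mp hc
    rw [hi, Finset.sum_singleton] at hsum' hsq'
    have ht : t = 1 := by nlinarith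
    rw [hf', hi, Finset.sum_singleton, hsum', ht, Real.sqrt_one]
    norm_num [hf0]
  · obtain ⟨i, j, hij, hij2⟩ := Finset.card_eq_two.mp hc
    rw [hij2, Finset.sum_pair hij] at hsum' hsq'
    rw [hf', hij2, Finset.sum_pair hij]
    set c := μ i
    set d := μ j
    have ht : t = (c - d)^2 := by nlinarith
    rw [ht, Real.sqrt_sq_eq_abs]
    rcases le_total d c with h | h
    · rw [abs_of_nonneg (by linarith)]
      have h1 : (1 + (c - d))/2 = c := by linarith
      have h2 : (1 - (c - d))/2 = d := by linarith
      rw [h1, h2]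
    · rw [abs_of_nonpos (by linarith)]
      have h1 : (1 + -(c - d))/2 = d := by linarith
      have h2 : (1 - -(c - d))/2 = c := by linarith
      rw [h1, h2, add_comm]

end Aux4

/-- Jensen divergence between two rank-one projections. -/
theorem jensen_rankOne_projections {n : ℕ} (f : ℝ → ℝ)
    (hconv : StrictConvexOn ℝ (Set.Ici 0) f)
    (hcont : ContinuousOn f (Set.Ici 0))
    (hf0 : f 0 = 0) (hf1 : f 1 = 0)
    (P Q : Matrix (Fin n) (Fin n) ℂ) (hP : IsRankOneProj P) (hQ : IsRankOneProj Q) :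
    jensen f P Q =
      -(f ((1 + Real.sqrt (((P * Q).trace).re)) / 2) +
        f ((1 - Real.sqrt (((P * Q).trace).re)) / 2)) := by
  obtain ⟨hPh, hPi, hPr⟩ := hP
  obtain ⟨hQh, hQi, hQr⟩ := hQ
  set t : ℝ := ((P * Q).trace).re with htdef
  set M : Matrix (Fin n) (Fin n) ℂ := (1/2 : ℂ) • (P + Q) with hMdef
  have hMpsd : M.PosSemidef :=
    posSemidef_half_smul ((posSemidef_of_proj hPh hPi).add (posSemidef_of_proj hQh hQi))
  have hMh : M.IsHermitian := hMpsd.1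
  obtain ⟨htrP, -⟩ := trace_of_rankOneProj hPh hPi hPr
  obtain ⟨htrQ, -⟩ := trace_of_rankOneProj hQh hQi hQr
  set μ : Fin n → ℝ := hMh.eigenvalues with hμdef
  -- reduce jensen to -trace of matFun f M
  have hjen : jensen f P Q = -((matFun f M).trace.re) := by
    rw [jensen, matFun_eq_zero_of_proj f hf0 hf1 hPh hPi,
      matFun_eq_zero_of_proj f hf0 hf1 hQh hQi]
    simp only [add_zero, smul_zero, zero_sub, Matrix.trace_neg, Complex.neg_re]
    rfl
  -- eigenvalue sum
  have hsum : ∑ i, μ i = 1 := by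
    have h1 : M.trace = 1 := by
      rw [hMdef, trace_smul, trace_add, htrP, htrQ, smul_eq_mul]
      norm_num
    have h2 := trace_eq_sum_eigen hMh
    rw [h1] at h2
    have h3 : ((∑ i, μ i : ℝ) : ℂ) = 1 := by push_cast; rw [← h2]
    exact_mod_cast h3
  -- eigenvalue square sum
  have hexp : M * M = (1/4 : ℂ) • (P + P * Q + (Q * P + Q)) := by
    rw [hMdef, Matrix.smul_mul, Matrix.mul_smul, smul_smul]
    congr 1
    · norm_num
    · rw [Matrix.add_mul, Matrix.mul_add, Matrix.mul_add, hPi, hQi]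
  have htrQP : (Q * P).trace = (P * Q).trace := trace_mul_comm _ _
  have hsq : ∑ i, (μ i) ^ 2 = (1 + t) / 2 := by
    have h2 := trace_sq_eq_sum_eigen_sq hMh
    have h3 : (M * M).trace =
        (1/4 : ℂ) * ((1 : ℂ) + (P * Q).trace + ((P * Q).trace + 1)) := by
      rw [hexp, trace_smul, smul_eq_mul, trace_add, trace_add, trace_add, htrP, htrQ, htrQP]
    have h4 : ((∑ i, (μ i) ^ 2 : ℝ) : ℂ) =
        (1/4 : ℂ) * ((1 : ℂ) + (P * Q).trace + ((P * Q).trace + 1)) := by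
      push_cast
      rw [← h2, h3]
    have h5 := congrArg Complex.re h4
    simp [Complex.mul_re, Complex.add_re, Complex.add_im, ← Complex.ofReal_pow, Complex.ofReal_re, ← htdef] at h5
    rw [h5]; ring
  -- rank bound
  have hcard : (Finset.univ.filter (fun i => μ i ≠ 0)).card ≤ 2 := by
    have hrank : M.rank ≤ 2 := by
      rw [hMdef, rank_half_smul]
      calc (P + Q).rank ≤ P.rank + Q.rank := rank_add_le' P Q
        _ = 2 := by rw [hPr, hQr]
    have hre := hMh.rank_eq_card_non_zero_eigs
    rw [Fintype.card_subtype] at hre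
    simp only [← hμdef] at hre
    omega
  -- conclude
  rw [hjen, trace_matFun f hMh]
  have h6 : (∑ i, (f (μ i) : ℂ)).re = ∑ i, f (μ i) := by
    rw [show (∑ i, (f (μ i) : ℂ)) = ((∑ i, f (μ i) : ℝ) : ℂ) by push_cast; rfl]
    exact Complex.ofReal_re _
  rw [h6, sum_f_two_support f hf0 t μ hcard hsum hsq]
end
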